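/- Burnt gas temperature with distinct specific heats: let c < 0, ṁ = −ρ_s·c > 0, c_s, c_p > 0, λ_s, λ_g > 0, D_s = λ_s/(ρ_s·c_s), ν < 0, M > 0, Q_mol ∈ ℝ and Q_p ∈ ℝ. Suppose T : ℝ → ℝ is continuous, C² on (−∞,0) and on (0,∞), with lim_{x→−∞} T(x) = T₀, lim_{x→−∞} T′(x) = 0, lim_{x→+∞} T(x) = T_f and lim_{x→+∞} T′(x) = 0; on the solid side −c·T′(x) − D_s·T″(x) = 0 for x < 0; on the gas side ṁ·T′(x) − (λ_g/c_p)·T″(x) = (Q_mol/c_p)·ω(x) for x > 0, where ω is integrable with ∫₀^∞ ω = −ṁ/(M·ν); and the interface energy balance λ_s·T′(0⁻) = ṁ·Q_p + λ_g·T′(0⁺) holds, T being continuous at 0 with surface value T_s = T(0). Then, with Q_g = −Q_mol/(ν·M), the burnt gas temperature satisfies T_f = (1 − c_s/c_p)·T_s + (c_s/c_p)·T₀ + (Q_p + Q_g)/c_p. -/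

import Mathlib

/-- Burnt gas temperature with distinct specific heats `c_s ≠ c_p`: with `c < 0` the
regression velocity, `ṁ = −ρs·c > 0`, specific heats `cs, cp > 0`, conductivities
`λs, λg > 0`, `D_s = λs/(ρs·cs)`, `ν < 0`, `M > 0`, if the temperature `T` is continuous
on `ℝ`, C² away from the interface `x = 0`, tends to `T₀` (with vanishing gradient) at
`−∞` and to `T_f` (with vanishing gradient) at `+∞`, satisfies the solid heat equation
`−c·T′ − D_s·T″ = 0` on `(−∞,0)` and the gas energy equation
`ṁ·T′ − (λg/cp)·T″ = (Q_mol/cp)·ω` on `(0,∞)` with `∫₀^∞ ω = −ṁ/(M·ν)`, and the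
interface energy balance `λs·T′(0⁻) = ṁ·Q_p + λg·T′(0⁺)` holds with surface
temperature `T_s = T(0)`, then with `Q_g = −Q_mol/(ν·M)` we have
`T_f = (1 − cs/cp)·T_s + (cs/cp)·T₀ + (Q_p + Q_g)/cp`. -/
theorem burnt_gas_temperature_distinct_specific_heats
    (c ρs mdot cs cp lams lamg ν M Qmol Qp T₀ Tf : ℝ)
    (hc : c < 0) (hρs : 0 < ρs) (hmdot : mdot = -(ρs * c))
    (hcs : 0 < cs) (hcp : 0 < cp) (hlams : 0 < lams) (hlamg : 0 < lamg)
    (hν : ν < 0) (hM : 0 < M)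
    (T ω : ℝ → ℝ)
    (hTcont : Continuous T)
    (hTd1 : ∀ x : ℝ, x ≠ 0 → DifferentiableAt ℝ T x)
    (hTd2 : ∀ x : ℝ, x ≠ 0 → DifferentiableAt ℝ (deriv T) x)
    (hTminf : Filter.Tendsto T Filter.atBot (nhds T₀))
    (hT'minf : Filter.Tendsto (deriv T) Filter.atBot (nhds 0))
    (hTpinf : Filter.Tendsto T Filter.atTop (nhds Tf))
    (hT'pinf : Filter.Tendsto (deriv T) Filter.atTop (nhds 0))
    (hsolid : ∀ x < (0:ℝ),
      -c * deriv T x - (lams / (ρs * cs)) * deriv (deriv T) x = 0)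
    (hgas : ∀ x > (0:ℝ),
      mdot * deriv T x - (lamg / cp) * deriv (deriv T) x = (Qmol / cp) * ω x)
    (hωint : MeasureTheory.IntegrableOn ω (Set.Ioi 0))
    (hωtot : (∫ x in Set.Ioi (0:ℝ), ω x) = -mdot / (M * ν))
    (gl gr : ℝ)
    (hgl : Filter.Tendsto (deriv T) (nhdsWithin 0 (Set.Iio 0)) (nhds gl))
    (hgr : Filter.Tendsto (deriv T) (nhdsWithin 0 (Set.Ioi 0)) (nhds gr))
    (hinterface : lams * gl = mdot * Qp + lamg * gr) :
    Tf = (1 - cs / cp) * T 0 + (cs / cp) * T₀ + (Qp + -Qmol / (ν * M)) / cp := by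

  classical
  have hmne : mdot ≠ 0 := by nlinarith [mul_pos hρs (neg_pos.mpr hc)]
  set Ds : ℝ := lams / (ρs * cs) with hDs
  set K : ℝ := lamg / cp with hK
  -- Solid-side function
  set F : ℝ → ℝ := fun x => if x = 0 then (-c * T 0 - Ds * gl) else (-c * T x - Ds * deriv T x) with hF
  have hFcont : ContinuousWithinAt F (Set.Iic 0) 0 := by
    rw [← continuousWithinAt_diff_self, Set.Iic_diff_right]
    have hlim : Filter.Tendsto (fun x => -c * T x - Ds * deriv T x)
        (nhdsWithin 0 (Set.Iio 0)) (nhds (-c * T 0 - Ds * gl)) := by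
      exact (((hTcont.tendsto 0).mono_left nhdsWithin_le_nhds).const_mul (-c)).sub
        (hgl.const_mul Ds)
    have heq : F =ᶠ[nhdsWithin 0 (Set.Iio 0)] fun x => -c * T x - Ds * deriv T x := by
      filter_upwards [self_mem_nhdsWithin] with x hx
      have hxne : x ≠ 0 := ne_of_lt (Set.mem_Iio.mp hx)
      simp [hF, hxne]
    have : Filter.Tendsto F (nhdsWithin 0 (Set.Iio 0)) (nhds (-c * T 0 - Ds * gl)) :=
      hlim.congr' heq.symm
    simpa [ContinuousWithinAt, hF] using this
  have hFderiv : ∀ x ∈ Set.Iio (0:ℝ), HasDerivAt F 0 x := by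
    intro x hx
    have hxne : x ≠ 0 := ne_of_lt hx
    have h1 : HasDerivAt (fun y => -c * T y - Ds * deriv T y)
        (-c * deriv T x - Ds * deriv (deriv T) x) x :=
      (((hTd1 x hxne).hasDerivAt).const_mul (-c)).sub
        (((hTd2 x hxne).hasDerivAt).const_mul Ds)
    have heq : (fun y => -c * T y - Ds * deriv T y) =ᶠ[nhds x] F := by
      filter_upwards [isOpen_compl_singleton.mem_nhds (by simpa using hxne)] with y hy
      simp [hF, Set.mem_compl_iff, Set.mem_singleton_iff] at hy ⊢
      simp [hy]
    have := h1.congr_of_eventuallyEq heq.symm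
    rwa [hsolid x hx] at this
  have hFbot : Filter.Tendsto F Filter.atBot (nhds (-c * T₀ - Ds * 0)) := by
    have hlim : Filter.Tendsto (fun x => -c * T x - Ds * deriv T x)
        Filter.atBot (nhds (-c * T₀ - Ds * 0)) :=
      (hTminf.const_mul (-c)).sub (hT'minf.const_mul Ds)
    refine hlim.congr' ?_
    filter_upwards [Filter.eventually_lt_atBot (0:ℝ)] with x hx
    have hxne : x ≠ 0 := ne_of_lt hx
    simp [hF, hxne]
  have hsolidint : (0:ℝ) = F 0 - (-c * T₀ - Ds * 0) := by
    have := MeasureTheory.integral_Iic_of_hasDerivAt_of_tendsto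
      (f := F) (f' := fun _ => (0:ℝ)) (a := 0) (m := -c * T₀ - Ds * 0)
      hFcont hFderiv (by simp [MeasureTheory.integrableOn_const]) hFbot
    simpa using this
  have E1 : -c * T 0 - Ds * gl = -c * T₀ := by
    have hF0 : F 0 = -c * T 0 - Ds * gl := by simp [hF]
    rw [hF0] at hsolidint; linarith
  -- Gas-side function
  set G : ℝ → ℝ := fun x => if x = 0 then (mdot * T 0 - K * gr) else (mdot * T x - K * deriv T x)
    with hG
  have hGcont : ContinuousWithinAt G (Set.Ici 0) 0 := by
    rw [← continuousWithinAt_diff_self, Set.Ici_sdiff_left]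
    have hlim : Filter.Tendsto (fun x => mdot * T x - K * deriv T x)
        (nhdsWithin 0 (Set.Ioi 0)) (nhds (mdot * T 0 - K * gr)) :=
      (((hTcont.tendsto 0).mono_left nhdsWithin_le_nhds).const_mul mdot).sub
        (hgr.const_mul K)
    have heq : G =ᶠ[nhdsWithin 0 (Set.Ioi 0)] fun x => mdot * T x - K * deriv T x := by
      filter_upwards [self_mem_nhdsWithin] with x hx
      have hxne : x ≠ 0 := ne_of_gt (Set.mem_Ioi.mp hx)
      simp [hG, hxne]
    have : Filter.Tendsto G (nhdsWithin 0 (Set.Ioi 0)) (nhds (mdot * T 0 - K * gr)) :=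
      hlim.congr' heq.symm
    simpa [ContinuousWithinAt, hG] using this
  have hGderiv : ∀ x ∈ Set.Ioi (0:ℝ), HasDerivAt G ((Qmol / cp) * ω x) x := by
    intro x hx
    have hxne : x ≠ 0 := ne_of_gt hx
    have h1 : HasDerivAt (fun y => mdot * T y - K * deriv T y)
        (mdot * deriv T x - K * deriv (deriv T) x) x :=
      (((hTd1 x hxne).hasDerivAt).const_mul mdot).sub
        (((hTd2 x hxne).hasDerivAt).const_mul K)
    have heq : (fun y => mdot * T y - K * deriv T y) =ᶠ[nhds x] G := by
      filter_upwards [isOpen_compl_singleton.mem_nhds (by simpa using hxne)] with y hy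
      simp [Set.mem_compl_iff, Set.mem_singleton_iff] at hy
      simp [hG, hy]
    have := h1.congr_of_eventuallyEq heq.symm
    rwa [hgas x hx] at this
  have hGtop : Filter.Tendsto G Filter.atTop (nhds (mdot * Tf - K * 0)) := by
    have hlim : Filter.Tendsto (fun x => mdot * T x - K * deriv T x)
        Filter.atTop (nhds (mdot * Tf - K * 0)) :=
      (hTpinf.const_mul mdot).sub (hT'pinf.const_mul K)
    refine hlim.congr' ?_
    filter_upwards [Filter.eventually_gt_atTop (0:ℝ)] with x hx
    have hxne : x ≠ 0 := ne_of_gt hx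
    simp [hG, hxne]
  have hgasintegrable : MeasureTheory.IntegrableOn (fun x => (Qmol / cp) * ω x) (Set.Ioi 0) :=
    hωint.const_mul _
  have hgasint : (∫ x in Set.Ioi (0:ℝ), (Qmol / cp) * ω x)
      = (mdot * Tf - K * 0) - G 0 :=
    MeasureTheory.integral_Ioi_of_hasDerivAt_of_tendsto hGcont hGderiv hgasintegrable hGtop
  have E2 : (Qmol / cp) * (-mdot / (M * ν)) = mdot * Tf - (mdot * T 0 - K * gr) := by
    rw [MeasureTheory.integral_const_mul, hωtot] at hgasint
    have hG0 : G 0 = mdot * T 0 - K * gr := by simp [hG]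
    rw [hG0] at hgasint; linarith
  -- Final algebra
  have hcne : c ≠ 0 := ne_of_lt hc
  have hρne : ρs ≠ 0 := ne_of_gt hρs
  have hcsne : cs ≠ 0 := ne_of_gt hcs
  have hcpne : cp ≠ 0 := ne_of_gt hcp
  have hνne : ν ≠ 0 := ne_of_lt hν
  have hMne : M ≠ 0 := ne_of_gt hM
  have hglval : lams * gl = mdot * cs * (T 0 - T₀) := by
    rw [hDs] at E1
    field_simp at E1
    rw [hmdot]; nlinarith [E1]
  rw [hglval] at hinterface
  rw [hK] at E2
  field_simp at E2 ⊢
  refine mul_left_cancel₀ hmne ?_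
  linear_combination -E2 + (M * ν) * hinterface
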